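/- Let p : ℕ → ℝ (indexed from 1) be a nonincreasing sequence with p_i ≥ 0 for all i and Σ_{i=1}^{∞} p_i = 1, and let m ≥ 1 be an integer. Suppose g_m and g_{m+1} are reals with 0 ≤ g_m ≤ Σ_{i=m}^{∞} p_i, 0 ≤ g_{m+1} ≤ Σ_{i=m+1}^{∞} p_i, and g_{m+1} < 1. Then the entropy H(p) = Σ_{i=1}^{∞} p_i·log₂(1/p_i) (with the convention 0·log₂(1/0) = 0) satisfies H(p) ≥ Σ_{i=1}^{m−1} p_i·log₂(1/p_i) + g_m·log₂( m/(1 − g_{m+1}) ). -/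

import Mathlib

set_option maxHeartbeats 1000000 in
/-- Orlitsky–El Gamal entropy lower bound: if `p₁ ≥ p₂ ≥ … ≥ 0` with `∑ᵢ pᵢ = 1`, and
`g_m ≤ ∑_{i≥m} pᵢ`, `g_{m+1} ≤ ∑_{i≥m+1} pᵢ` with `g_m, g_{m+1} ≥ 0` and `g_{m+1} < 1`,
then `H(p) ≥ ∑_{i=1}^{m-1} pᵢ log₂(1/pᵢ) + g_m·log₂(m/(1-g_{m+1}))`.
(The entropy is taken in `ℝ≥0∞` so that infinite entropy is handled correctly; note that
in Lean `p * logb 2 (1/p) = 0` automatically when `p = 0`.) -/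
theorem stmt_15 (p : ℕ → ℝ)
    (hnn : ∀ i, 1 ≤ i → 0 ≤ p i)
    (hmono : ∀ i, 1 ≤ i → p (i + 1) ≤ p i)
    (hsummable : Summable (fun i : ℕ => p (i + 1)))
    (hsum : ∑' i : ℕ, p (i + 1) = 1)
    (m : ℕ) (hm : 1 ≤ m) (gm gm1 : ℝ)
    (hgm0 : 0 ≤ gm) (hgm : gm ≤ ∑' i : ℕ, p (m + i))
    (hgm10 : 0 ≤ gm1) (hgm1 : gm1 ≤ ∑' i : ℕ, p (m + 1 + i))
    (hgm1lt : gm1 < 1) :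
    ENNReal.ofReal ((∑ i ∈ Finset.Icc 1 (m - 1), p i * Real.logb 2 (1 / p i))
        + gm * Real.logb 2 ((m : ℝ) / (1 - gm1)))
      ≤ ∑' i : ℕ, ENNReal.ofReal (p (i + 1) * Real.logb 2 (1 / p (i + 1))) := by
  have hnn' : ∀ i, 1 ≤ i → 0 ≤ p i := hnn
  have hple : ∀ i, 1 ≤ i → p i ≤ 1 := by
    intro i hi
    have : p ((i - 1) + 1) ≤ ∑' j, p (j + 1) :=
      Summable.le_tsum hsummable (i - 1) (fun j _ => hnn _ (by omega))
    rw [show i - 1 + 1 = i by omega] at this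
    linarith [hsum ▸ this]
  have htermnn : ∀ i, 1 ≤ i → 0 ≤ p i * Real.logb 2 (1 / p i) := by
    intro i hi
    rcases eq_or_lt_of_le (hnn i hi) with h | h
    · simp [← h]
    · exact mul_nonneg h.le (Real.logb_nonneg one_lt_two
        (by rw [le_div_iff₀ h]; simpa using hple i hi))
  have hanti : ∀ i j, 1 ≤ i → i ≤ j → p j ≤ p i := by
    intro i j hi hij
    induction j with
    | zero => omega
    | succ k ih =>
      rcases Nat.lt_or_ge i (k + 1) with h | h
      · exact le_trans (hmono k (by omega)) (ih (by omega))
      · have : i = k + 1 := le_antisymm hij h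
        subst this; exact le_refl _
  have hmpos : (0:ℝ) < m := by exact_mod_cast hm
  have h1gm1 : 0 < 1 - gm1 := by linarith
  -- p m ≤ (1 - gm1) / m
  have hsplit : ∑ i ∈ Finset.range m, p (i + 1) + ∑' i, p (i + m + 1) = 1 := by
    rw [← hsum]; exact hsummable.sum_add_tsum_nat_add m
  have htail1 : (∑' i : ℕ, p (i + m + 1)) = ∑' i : ℕ, p (m + 1 + i) :=
    tsum_congr fun i => by rw [show i + m + 1 = m + 1 + i by omega]
  have hpm : p m ≤ (1 - gm1) / m := by
    have h1 : (m : ℝ) * p m ≤ ∑ i ∈ Finset.range m, p (i + 1) := by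
      calc (m : ℝ) * p m = ∑ _i ∈ Finset.range m, p m := by
            rw [Finset.sum_const, Finset.card_range, nsmul_eq_mul]
        _ ≤ ∑ i ∈ Finset.range m, p (i + 1) :=
            Finset.sum_le_sum fun i hi =>
              hanti (i + 1) m (by omega) (by simp only [Finset.mem_range] at hi; omega)
    rw [le_div_iff₀ hmpos]
    have := htail1 ▸ hsplit
    nlinarith [hgm1]
  set L := Real.logb 2 ((m : ℝ) / (1 - gm1)) with hL
  have hm1 : (1:ℝ) ≤ m := by exact_mod_cast hm
  have hLnn : 0 ≤ L := Real.logb_nonneg one_lt_two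
    (by rw [le_div_iff₀ h1gm1]; linarith)
  -- per-term bound on the tail
  have hterm : ∀ i : ℕ, p (i + m) * L ≤ p (i + m) * Real.logb 2 (1 / p (i + m)) := by
    intro i
    rcases eq_or_lt_of_le (hnn (i + m) (by omega)) with h | h
    · simp [← h]
    · apply mul_le_mul_of_nonneg_left _ h.le
      rw [hL, Real.logb_le_logb one_lt_two (by positivity) (by positivity)]
      rw [div_le_div_iff₀ h1gm1 h]
      have : p (i + m) ≤ p m := hanti m (i + m) hm (by omega)
      have := hpm
      rw [le_div_iff₀ hmpos] at this
      nlinarith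
  -- summability of the tail of p
  have hsumtail : Summable (fun i : ℕ => p (i + m)) := by
    have h := (summable_nat_add_iff (f := fun i : ℕ => p (i + 1)) (m - 1)).mpr hsummable
    have he : (fun i : ℕ => p (i + m)) = fun i : ℕ => p (i + (m - 1) + 1) :=
      funext fun i => by rw [show i + m = i + (m - 1) + 1 by omega]
    rw [he]; exact h
  have hgm' : gm ≤ ∑' i : ℕ, p (i + m) := by
    refine hgm.trans (le_of_eq (tsum_congr fun i => ?_))
    rw [show m + i = i + m by omega]
  -- split the entropy tsum
  rw [← Summable.sum_add_tsum_nat_add' (f := fun i : ℕ => ENNReal.ofReal (p (i + 1) * Real.logb 2 (1 / p (i + 1))))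
      (k := m - 1) ENNReal.summable]
  rw [ENNReal.ofReal_add (Finset.sum_nonneg fun i hi =>
        htermnn i (Finset.mem_Icc.mp hi).1) (mul_nonneg hgm0 hLnn)]
  gcongr
  · -- finite part
    rw [ENNReal.ofReal_sum_of_nonneg (fun i hi => htermnn i (Finset.mem_Icc.mp hi).1)]
    rw [show Finset.Icc 1 (m - 1) = Finset.Ico 1 m by
      rw [← Finset.Ico_add_one_right_eq_Icc]; congr 1; omega]
    rw [Finset.sum_Ico_eq_sum_range]
    apply le_of_eq
    refine Finset.sum_congr rfl fun i _ => ?_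
    rw [show 1 + i = i + 1 by omega]
  · -- tail part
    calc ENNReal.ofReal (gm * L)
        ≤ ENNReal.ofReal ((∑' i : ℕ, p (i + m)) * L) :=
          ENNReal.ofReal_le_ofReal (mul_le_mul_of_nonneg_right hgm' hLnn)
      _ = ENNReal.ofReal (∑' i : ℕ, p (i + m) * L) := by rw [tsum_mul_right]
      _ = ∑' i : ℕ, ENNReal.ofReal (p (i + m) * L) :=
          ENNReal.ofReal_tsum_of_nonneg (fun i => mul_nonneg (hnn _ (by omega)) hLnn)
            (hsumtail.mul_right L)
      _ ≤ ∑' i : ℕ, ENNReal.ofReal (p (i + (m - 1) + 1) * Real.logb 2 (1 / p (i + (m - 1) + 1))) := by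
          apply ENNReal.tsum_le_tsum
          intro i
          rw [show i + (m - 1) + 1 = i + m by omega]
          exact ENNReal.ofReal_le_ofReal (hterm i)
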